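/- Let X₁, X₂ and Z be mutually independent real random variables, where X₁ is exponentially distributed with mean λ₁ > 0, X₂ is exponentially distributed with mean λ₂ > 0, and Z is nonnegative. Let A, B, ρ, η, u₁, u₂ > 0 and set Q₁ᵖ = η·u₂/(A·λ₂) + (1/λ₁ + B·u₂/(A·λ₂))·η·u₁/B. Then ℙ( X₂ > (B·ρ·X₁·u₂ + η·ρ·Z·u₂ + u₂)/(A·ρ) and X₁ > (η·ρ·Z·u₁ + u₁)/(B·ρ) ) = ( A·λ₂/(A·λ₂ + B·u₂·λ₁) ) · exp( −u₂/(A·λ₂·ρ) − (1/λ₁ + B·u₂/(A·λ₂))·u₁/(B·ρ) ) · 𝔼[ exp(−Q₁ᵖ·Z) ]. -/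

import Mathlib

open MeasureTheory ProbabilityTheory Real

section Aux
open Set

lemma my_integral_exp_neg_mul_Ioi {c : ℝ} (a : ℝ) (hc : 0 < c) :
    ∫ x in Set.Ioi a, Real.exp (-(c * x)) = Real.exp (-(c * a)) / c := by
  have hderiv : ∀ x ∈ Set.Ici a,
      HasDerivAt (fun x => -Real.exp (-(c * x)) / c) (Real.exp (-(c * x))) x := by
    intro x _
    have h1 : HasDerivAt (fun x : ℝ => -(c * x)) (-c) x := by
      simpa using (hasDerivAt_neg x).const_mul c
    have h2 := (h1.exp).neg.div_const c
    refine h2.congr_deriv ?_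
    field_simp [hc.ne']
  have hint : IntegrableOn (fun x => Real.exp (-(c * x))) (Set.Ioi a) := by
    simpa [neg_mul] using exp_neg_integrableOn_Ioi a hc
  have htend : Filter.Tendsto (fun x => -Real.exp (-(c * x)) / c) Filter.atTop (nhds 0) := by
    have : Filter.Tendsto (fun x : ℝ => Real.exp (-(c * x))) Filter.atTop (nhds 0) := by
      apply Real.tendsto_exp_atBot.comp
      apply Filter.tendsto_atTop_atBot.mpr
      intro b
      exact ⟨-b / c, fun x hx => by nlinarith [mul_le_mul_of_nonneg_left hx hc.le, mul_div_cancel₀ (-b) hc.ne']⟩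
    simpa using (this.neg.div_const c)
  rw [MeasureTheory.integral_Ioi_of_hasDerivAt_of_tendsto' hderiv hint htend]
  field_simp
  ring

lemma my_lintegral_exp_neg_mul_Ioi {c C : ℝ} (a : ℝ) (hc : 0 < c) (hC : 0 ≤ C) :
    ∫⁻ x in Set.Ioi a, ENNReal.ofReal (C * Real.exp (-(c * x))) =
      ENNReal.ofReal (C * Real.exp (-(c * a)) / c) := by
  have hint : IntegrableOn (fun x => Real.exp (-(c * x))) (Set.Ioi a) := by
    simpa [neg_mul] using exp_neg_integrableOn_Ioi a hc
  rw [← MeasureTheory.ofReal_integral_eq_lintegral_ofReal (hint.const_mul C)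
    (Filter.Eventually.of_forall fun x => by positivity)]
  rw [MeasureTheory.integral_const_mul, my_integral_exp_neg_mul_Ioi a hc, mul_div_assoc]

lemma expLaw_tail {lam : ℝ} (hlam : 0 < lam) {t : ℝ} (ht : 0 ≤ t) :
    (MeasureTheory.volume.withDensity
      (fun x => ENNReal.ofReal (if 0 ≤ x then (1 / lam) * Real.exp (-x / lam) else 0)))
      (Set.Ioi t) = ENNReal.ofReal (Real.exp (-t / lam)) := by
  rw [withDensity_apply _ measurableSet_Ioi]
  have hcong : ∀ x ∈ Set.Ioi t,
      ENNReal.ofReal (if 0 ≤ x then (1 / lam) * Real.exp (-x / lam) else 0) =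
        ENNReal.ofReal ((1 / lam) * Real.exp (-((1 / lam) * x))) := by
    intro x hx
    rw [if_pos (le_trans ht (le_of_lt hx))]
    congr 2
    ring
  rw [setLIntegral_congr_fun measurableSet_Ioi hcong,
    my_lintegral_exp_neg_mul_Ioi t (by positivity) (by positivity)]
  congr 1
  have h : -(1 / lam * t) = -t / lam := by ring
  rw [h]
  field_simp

end Aux

/-- A real random variable `X` is exponentially distributed with mean `lam > 0` if its law has
density `(1/lam) * exp (-x/lam)` on `[0, ∞)` and `0` on `(-∞, 0)`. -/
def HasExpLaw {Ω : Type*} [MeasurableSpace Ω] (P : Measure Ω) (X : Ω → ℝ) (lam : ℝ) : Prop :=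
  Measurable X ∧
    P.map X = MeasureTheory.volume.withDensity
      (fun x => ENNReal.ofReal (if 0 ≤ x then (1 / lam) * Real.exp (-x / lam) else 0))

theorem stmt_10 {Ω : Type*} [MeasurableSpace Ω] (P : Measure Ω) [IsProbabilityMeasure P]
    (lam₁ lam₂ A B ρ η u₁ u₂ : ℝ)
    (hlam₁ : 0 < lam₁) (hlam₂ : 0 < lam₂) (hA : 0 < A) (hB : 0 < B) (hρ : 0 < ρ)
    (hη : 0 < η) (hu₁ : 0 < u₁) (hu₂ : 0 < u₂)
    (X₁ X₂ Z : Ω → ℝ)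
    (hX₁ : HasExpLaw P X₁ lam₁) (hX₂ : HasExpLaw P X₂ lam₂)
    (hZmeas : Measurable Z) (hZnonneg : ∀ ω, 0 ≤ Z ω)
    (hindep : iIndepFun ![X₁, X₂, Z] P)
    (Q₁p : ℝ)
    (hQ₁p : Q₁p = η * u₂ / (A * lam₂) + (1 / lam₁ + B * u₂ / (A * lam₂)) * η * u₁ / B) :
    (P {ω | X₂ ω > (B * ρ * X₁ ω * u₂ + η * ρ * Z ω * u₂ + u₂) / (A * ρ) ∧
        X₁ ω > (η * ρ * Z ω * u₁ + u₁) / (B * ρ)}).toReal =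
      (A * lam₂ / (A * lam₂ + B * u₂ * lam₁)) *
        Real.exp (-u₂ / (A * lam₂ * ρ) - (1 / lam₁ + B * u₂ / (A * lam₂)) * u₁ / (B * ρ)) *
        ∫ ω, Real.exp (-Q₁p * Z ω) ∂P := by
  obtain ⟨hX₁m, hX₁law⟩ := hX₁
  obtain ⟨hX₂m, hX₂law⟩ := hX₂
  set c : ℝ := 1 / lam₁ + B * u₂ / (A * lam₂) with hc_def
  have hc : 0 < c := by positivity
  set K₀ : ℝ := A * lam₂ / (A * lam₂ + B * u₂ * lam₁) with hK₀_def
  have hK₀ : 0 < K₀ := by positivity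
  set e₀ : ℝ := -u₂ / (A * lam₂ * ρ) - c * u₁ / (B * ρ) with he₀_def
  set K : ℝ := K₀ * Real.exp e₀ with hK_def
  have hK : 0 < K := by positivity
  haveI : IsProbabilityMeasure (P.map X₁) := Measure.isProbabilityMeasure_map hX₁m.aemeasurable
  haveI : IsProbabilityMeasure (P.map X₂) := Measure.isProbabilityMeasure_map hX₂m.aemeasurable
  haveI : IsProbabilityMeasure (P.map Z) := Measure.isProbabilityMeasure_map hZmeas.aemeasurable
  have hmeas3 : ∀ i, Measurable (![X₁, X₂, Z] i) := by
    intro i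
    fin_cases i <;> simpa using ‹_›
  have hindepWX₂ : IndepFun (fun ω => (X₁ ω, Z ω)) X₂ P := by
    have h := hindep.indepFun_prodMk hmeas3 0 2 1 (by decide) (by decide)
    simpa using h
  have hindepX₁Z : IndepFun X₁ Z P := by
    have h := hindep.indepFun (show (0 : Fin 3) ≠ 2 by decide)
    simpa using h
  have hμW : P.map (fun ω => (X₁ ω, Z ω)) = (P.map X₁).prod (P.map Z) :=
    (indepFun_iff_map_prod_eq_prod_map_map hX₁m.aemeasurable hZmeas.aemeasurable).mp hindepX₁Z
  have hmapP : P.map (fun ω => ((X₁ ω, Z ω), X₂ ω)) = ((P.map X₁).prod (P.map Z)).prod (P.map X₂) := by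
    rw [← hμW]
    exact (indepFun_iff_map_prod_eq_prod_map_map (hX₁m.prodMk hZmeas).aemeasurable
      hX₂m.aemeasurable).mp hindepWX₂
  set S : Set ((ℝ × ℝ) × ℝ) := {p | p.2 > (B * ρ * p.1.1 * u₂ + η * ρ * p.1.2 * u₂ + u₂) / (A * ρ) ∧
      p.1.1 > (η * ρ * p.1.2 * u₁ + u₁) / (B * ρ)} with hS_def
  have hS : MeasurableSet S := by
    have h1 : MeasurableSet {p : (ℝ × ℝ) × ℝ |
        p.2 > (B * ρ * p.1.1 * u₂ + η * ρ * p.1.2 * u₂ + u₂) / (A * ρ)} :=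
      measurableSet_lt (by fun_prop) (by fun_prop)
    have h2 : MeasurableSet {p : (ℝ × ℝ) × ℝ | p.1.1 > (η * ρ * p.1.2 * u₁ + u₁) / (B * ρ)} :=
      measurableSet_lt (by fun_prop) (by fun_prop)
    exact h1.inter h2
  have hPE : P {ω | X₂ ω > (B * ρ * X₁ ω * u₂ + η * ρ * Z ω * u₂ + u₂) / (A * ρ) ∧
      X₁ ω > (η * ρ * Z ω * u₁ + u₁) / (B * ρ)} = (((P.map X₁).prod (P.map Z)).prod (P.map X₂)) S := by
    rw [← hmapP, Measure.map_apply ((hX₁m.prodMk hZmeas).prodMk hX₂m) hS]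
    rfl
  rw [hPE, Measure.prod_apply hS]
  have hνnn : ∀ᵐ z ∂(P.map Z), 0 ≤ z := by
    rw [ae_map_iff hZmeas.aemeasurable measurableSet_Ici]
    exact Filter.Eventually.of_forall hZnonneg
  have hprodnn : ∀ᵐ w ∂((P.map X₁).prod (P.map Z)), 0 ≤ w.2 := by
    rw [ae_iff]
    have h1 : {w : ℝ × ℝ | ¬0 ≤ w.2} = Set.univ ×ˢ {z : ℝ | ¬0 ≤ z} := by
      ext w; simp [Set.mem_prod]
    have h0 : (P.map Z) {z : ℝ | ¬0 ≤ z} = 0 := by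
      rw [← ae_iff]; exact hνnn
    rw [h1, Measure.prod_prod, h0, mul_zero]
  set f : ℝ × ℝ → ENNReal := Set.indicator {w : ℝ × ℝ | (η * ρ * w.2 * u₁ + u₁) / (B * ρ) < w.1}
      (fun w => ENNReal.ofReal
        (Real.exp (-((B * ρ * w.1 * u₂ + η * ρ * w.2 * u₂ + u₂) / (A * ρ)) / lam₂))) with hf_def
  have hfm : Measurable f := by
    apply Measurable.indicator
    · fun_prop
    · exact measurableSet_lt (by fun_prop) measurable_fst
  have hcong : ∀ᵐ w ∂((P.map X₁).prod (P.map Z)), (P.map X₂) (Prod.mk w ⁻¹' S) = f w := by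
    filter_upwards [hprodnn] with w hw
    by_cases h : (η * ρ * w.2 * u₁ + u₁) / (B * ρ) < w.1
    · have hslice : Prod.mk w ⁻¹' S =
          Set.Ioi ((B * ρ * w.1 * u₂ + η * ρ * w.2 * u₂ + u₂) / (A * ρ)) := by
        ext y
        simp only [hS_def, Set.mem_preimage, Set.mem_setOf_eq, Set.mem_Ioi, gt_iff_lt]
        exact ⟨fun hh => hh.1, fun h1 => ⟨h1, h⟩⟩
      have hw1 : 0 < w.1 := lt_trans (by positivity) h
      have ht0 : 0 ≤ (B * ρ * w.1 * u₂ + η * ρ * w.2 * u₂ + u₂) / (A * ρ) := by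
        apply div_nonneg _ (by positivity)
        nlinarith [mul_pos (mul_pos (mul_pos hB hρ) hw1) hu₂,
          mul_nonneg (mul_nonneg (mul_nonneg hη.le hρ.le) hw) hu₂.le]
      rw [hslice, hX₂law, expLaw_tail hlam₂ ht0, hf_def,
        Set.indicator_of_mem (show w ∈ {w : ℝ × ℝ | (η * ρ * w.2 * u₁ + u₁) / (B * ρ) < w.1} from h)]
    · have hslice : Prod.mk w ⁻¹' S = ∅ := by
        ext y
        simp only [hS_def, Set.mem_preimage, Set.mem_setOf_eq, Set.mem_empty_iff_false,
          iff_false, gt_iff_lt, not_and]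
        exact fun _ => h
      rw [hslice, measure_empty, hf_def, Set.indicator_of_notMem
        (show w ∉ {w : ℝ × ℝ | (η * ρ * w.2 * u₁ + u₁) / (B * ρ) < w.1} from h)]
  rw [lintegral_congr_ae hcong, MeasureTheory.lintegral_prod_symm f hfm.aemeasurable]
  have hinner : ∀ᵐ z ∂(P.map Z), (∫⁻ x, f (x, z) ∂(P.map X₁)) =
      ENNReal.ofReal (K * Real.exp (-Q₁p * z)) := by
    filter_upwards [hνnn] with z hz
    set b : ℝ := (η * ρ * z * u₁ + u₁) / (B * ρ) with hb_def
    have hb : 0 < b := by positivity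
    set Cz : ℝ := (1 / lam₁) * Real.exp (-((η * ρ * z * u₂ + u₂) / (A * ρ * lam₂))) with hCz_def
    have hCz : 0 < Cz := by positivity
    have hrw : (fun x => ENNReal.ofReal (if 0 ≤ x then (1 / lam₁) * Real.exp (-x / lam₁) else 0)
          * f (x, z)) =
        Set.indicator (Set.Ioi b) (fun x => ENNReal.ofReal (Cz * Real.exp (-(c * x)))) := by
      funext x
      by_cases hx : x ∈ Set.Ioi b
      · have hxb : b < x := hx
        have hx0 : 0 ≤ x := le_of_lt (lt_trans hb hxb)
        rw [Set.indicator_of_mem hx, hf_def, Set.indicator_of_mem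
          (show (x, z) ∈ {w : ℝ × ℝ | (η * ρ * w.2 * u₁ + u₁) / (B * ρ) < w.1} from hxb),
          if_pos hx0, ← ENNReal.ofReal_mul (by positivity)]
        congr 1
        have hmerge : ∀ a b C : ℝ, C * Real.exp a * Real.exp b = C * Real.exp (a + b) :=
          fun a b C => by rw [mul_assoc, ← Real.exp_add]
        rw [hCz_def, hc_def, hmerge, hmerge]
        congr 2
        field_simp
        ring
      · have hxb : ¬ ((η * ρ * z * u₁ + u₁) / (B * ρ) < x) := hx
        rw [Set.indicator_of_notMem hx, hf_def, Set.indicator_of_notMem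
          (show (x, z) ∉ {w : ℝ × ℝ | (η * ρ * w.2 * u₁ + u₁) / (B * ρ) < w.1} from hxb), mul_zero]
    have hdm : Measurable (fun x : ℝ =>
        ENNReal.ofReal (if 0 ≤ x then (1 / lam₁) * Real.exp (-x / lam₁) else 0)) := by
      apply Measurable.ennreal_ofReal
      exact Measurable.ite measurableSet_Ici (by fun_prop) (by fun_prop)
    rw [hX₁law, lintegral_withDensity_eq_lintegral_mul _ hdm
      (show Measurable (fun x : ℝ => f (x, z)) from hfm.comp measurable_prodMk_right)]
    rw [lintegral_congr (fun a => by
      simp only [Pi.mul_apply]; exact congrFun hrw a), lintegral_indicator measurableSet_Ioi,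
      my_lintegral_exp_neg_mul_Ioi b hc hCz.le]
    congr 1
    have h1 : Cz * Real.exp (-(c * b)) / c =
        (1 / (lam₁ * c)) * Real.exp (-((η * ρ * z * u₂ + u₂) / (A * ρ * lam₂)) + -(c * b)) := by
      rw [Real.exp_add, hCz_def]; field_simp
    have h2 : K * Real.exp (-Q₁p * z) = K₀ * Real.exp (e₀ + -Q₁p * z) := by
      rw [Real.exp_add, hK_def]; ring
    rw [h1, h2]
    have hA' : 1 / (lam₁ * c) = K₀ := by
      rw [hc_def, hK₀_def]; field_simp
    have hE : -((η * ρ * z * u₂ + u₂) / (A * ρ * lam₂)) + -(c * b) = e₀ + -Q₁p * z := by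
      rw [hb_def, hc_def, he₀_def, hQ₁p, hc_def]; field_simp; ring
    rw [hA', hE]
  rw [lintegral_congr_ae hinner]
  simp_rw [ENNReal.ofReal_mul hK.le]
  rw [lintegral_const_mul _ (by fun_prop : Measurable fun z : ℝ => ENNReal.ofReal (Real.exp (-Q₁p * z))),
    ENNReal.toReal_mul, ENNReal.toReal_ofReal hK.le]
  have hint : ∫ ω, Real.exp (-Q₁p * Z ω) ∂P =
      (∫⁻ z, ENNReal.ofReal (Real.exp (-Q₁p * z)) ∂(P.map Z)).toReal := by
    rw [← integral_map hZmeas.aemeasurable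
      (Measurable.aestronglyMeasurable (by fun_prop) :
        AEStronglyMeasurable (fun z : ℝ => Real.exp (-Q₁p * z)) (P.map Z)),
      integral_eq_lintegral_of_nonneg_ae (Filter.Eventually.of_forall fun z => (Real.exp_pos _).le)
      (Measurable.aestronglyMeasurable (by fun_prop))]
  rw [hint, hK_def]
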